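/- For every differential operator with constant coefficients L on 𝒮'(ℝⁿ) (a finite linear combination of partial derivative operators) and every tempered distribution u ∈ 𝒮'(ℝⁿ), L(u) = ∫_{ℝⁿ} u L(δ), i.e., L(u) = u ∘ (L∘δ)̂, where L∘δ is the Schwartz family x ↦ L(δₓ). -/

import Mathlib

open SchwartzMap

/-- The Schwartz test function space `𝒮(ℝⁿ)`. -/
abbrev TestF (n : ℕ) := SchwartzMap (EuclideanSpace ℝ (Fin n)) ℝ

/-- The space of tempered distributions `𝒮'(ℝⁿ)`. -/
abbrev TempDist (n : ℕ) := TestF n →L[ℝ] ℝ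

/-- The constant-coefficient differential operator `∂^α` on `𝒮(ℝⁿ)` for a
multi-index `α : Fin n → ℕ`. -/
noncomputable def partialPow {n : ℕ} (α : Fin n → ℕ) : TestF n →L[ℝ] TestF n :=
  (List.ofFn fun j : Fin n =>
    (LineDeriv.lineDerivOpCLM ℝ (TestF n) (EuclideanSpace.single j (1 : ℝ)) :
      TestF n →L[ℝ] TestF n) ^ (α j)).prod

/-- The constant-coefficient differential operator on `𝒮'(ℝⁿ)` with multi-indices
`α t` and coefficients `c t`: the finite linear combination `∑ t, c t • ∂^{α t}`,
where the distributional derivative `∂^{α} u` is `φ ↦ (-1)^{|α|} u (∂^α φ)`,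
so the sign `(-1)^{|α t|}` is absorbed into the coefficient. -/
noncomputable def diffOp {n N : ℕ} (α : Fin N → Fin n → ℕ) (c : Fin N → ℝ)
    (u : TempDist n) : TempDist n :=
  ∑ t, (c t * (-1 : ℝ) ^ (∑ j, α t j)) • (u.comp (partialPow (α t)))

/-- Every constant-coefficient differential operator `L` on `𝒮'(ℝⁿ)` satisfies
`L(u) = ∫ u L(δ) = u ∘ (L∘δ)̂`, where `(L∘δ)̂` is the operator associated with the
Schwartz family `x ↦ L(δₓ)`. -/
theorem diffOp_as_superposition {n N : ℕ} (α : Fin N → Fin n → ℕ) (c : Fin N → ℝ)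
    (Lδh : TestF n →L[ℝ] TestF n)
    (hLδh : ∀ (ψ : TestF n) (x : EuclideanSpace ℝ (Fin n)),
      Lδh ψ x = diffOp α c ((BoundedContinuousFunction.evalCLM ℝ x).comp
        (SchwartzMap.toBoundedContinuousFunctionCLM ℝ (EuclideanSpace ℝ (Fin n)) ℝ)) ψ)
    (u : TempDist n) :
    diffOp α c u = u.comp Lδh := by
  ext ψ
  have h : Lδh ψ = ∑ t, (c t * (-1 : ℝ) ^ (∑ j, α t j)) • partialPow (α t) ψ := by
    ext x
    rw [hLδh]
    have : (∑ t, (c t * (-1 : ℝ) ^ (∑ j, α t j)) • partialPow (α t) ψ) x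
        = ((BoundedContinuousFunction.evalCLM ℝ x).comp (SchwartzMap.toBoundedContinuousFunctionCLM ℝ (EuclideanSpace ℝ (Fin n)) ℝ)) (∑ t, (c t * (-1 : ℝ) ^ (∑ j, α t j)) • partialPow (α t) ψ) :=
      rfl
    rw [this, map_sum]
    simp [diffOp]
  simp [diffOp, ContinuousLinearMap.comp_apply, h, map_sum]
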